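/- arXiv:2511.21894 — 2 statements merged into one kernel-verified Lean document; each statement's English description precedes it below -/
import Mathlib

section
/- For every positive integer m, the set (m,m,0)·B_ω^{F^n}·(m,m,0) equals the image of B_ω^{F^n} under λ^m, i.e., it equals {(i,j,p) : i ≥ m, j ≥ m, p ∈ {0,…,n-1}}. -/
/-- The bicyclic-extension semigroup operation on `ℕ × ℕ × Fin n`. -/
def Bmul (n : ℕ) (x y : ℕ × ℕ × Fin n) : ℕ × ℕ × Fin n :=
  if x.2.1 ≤ y.1 then
    (x.1 - x.2.1 + y.1, y.2.1,
      ⟨max (x.2.2.1 - (y.1 - x.2.1)) y.2.2.1, by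
        have h1 := x.2.2.2; have h2 := y.2.2.2; omega⟩)
  else
    (x.1, x.2.1 - y.1 + y.2.1,
      ⟨max x.2.2.1 (y.2.2.1 - (x.2.1 - y.1)), by
        have h1 := x.2.2.2; have h2 := y.2.2.2; omega⟩)

/-- The shift endomorphism λ. -/
def lamB (n : ℕ) (x : ℕ × ℕ × Fin n) : ℕ × ℕ × Fin n :=
  (x.1 + 1, x.2.1 + 1, x.2.2)

/-- The endomorphism ϖ_n. -/
def varpiB (n : ℕ) (x : ℕ × ℕ × Fin n) : ℕ × ℕ × Fin n :=
  (x.1 + x.2.2.1, x.2.1 + x.2.2.1,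
    ⟨n - 1 - x.2.2.1, by have := x.2.2.2; omega⟩)

/-- The endomorphism α_[k] of B_ω^{F³}. -/
def alphaB (k : ℕ) (x : ℕ × ℕ × Fin 3) : ℕ × ℕ × Fin 3 :=
  if x.2.2.1 = 2 then (k * (x.1 + 1) - 1, k * (x.2.1 + 1) - 1, x.2.2)
  else (k * x.1, k * x.2.1, x.2.2)

lemma lam_iter (n m : ℕ) (x : ℕ × ℕ × Fin n) :
    (lamB n)^[m] x = (x.1 + m, x.2.1 + m, x.2.2) := by
  induction m with
  | zero => simp
  | succ k ih =>
    rw [Function.iterate_succ_apply', ih, lamB]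
    simp [Nat.add_assoc]

lemma range_lam (n m : ℕ) :
    Set.range ((lamB n)^[m]) = {z : ℕ × ℕ × Fin n | m ≤ z.1 ∧ m ≤ z.2.1} := by
  ext ⟨i, j, p⟩
  simp only [Set.mem_range, Set.mem_setOf_eq]
  constructor
  · rintro ⟨x, hx⟩
    rw [lam_iter] at hx
    obtain ⟨h1, h2, h3⟩ := Prod.mk.injEq .. ▸ hx
    simp_all
    omega
  · rintro ⟨h1, h2⟩
    exact ⟨(i - m, j - m, p), by rw [lam_iter]; simp; omega⟩

/-- `(m,m,0) · B_ω^{F^n} · (m,m,0)` equals the image of `λ^m`, which is the set of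
triples with both first coordinates at least `m`. -/
theorem sandwich_eq_lam_image (n m : ℕ) (hn : 0 < n) (hm : 0 < m) :
    {z : ℕ × ℕ × Fin n |
        ∃ x, z = Bmul n (Bmul n (m, m, ⟨0, hn⟩) x) (m, m, ⟨0, hn⟩)} =
      Set.range ((lamB n)^[m]) ∧
    Set.range ((lamB n)^[m]) = {z : ℕ × ℕ × Fin n | m ≤ z.1 ∧ m ≤ z.2.1} := by
  rw [range_lam]
  refine ⟨?_, rfl⟩
  ext ⟨i, j, p⟩
  simp only [Set.mem_setOf_eq]
  constructor
  · rintro ⟨⟨a, b, q⟩, hx⟩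
    simp only [Bmul] at hx
    split_ifs at hx <;> simp_all <;> omega
  · rintro ⟨h1, h2⟩
    refine ⟨(i, j, p), ?_⟩
    simp only [Bmul]
    split_ifs <;> simp_all [Prod.ext_iff, Fin.ext_iff] <;> omega
end

section
/- For every positive integer k, for all (i,j,p) in B_ω^{F³}: (((i,j,p)ϖ₃)α_[k])ϖ₃ = ((i,j,p)α_[k])λ^{k+1}, i.e., ϖ₃ ∘ α_[k] ∘ ϖ₃ = α_[k] ∘ λ^{k+1}. -/
/-- `ϖ₃ ∘ α_[k] ∘ ϖ₃ = α_[k] ∘ λ^{k+1}` (composition left to right). -/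
theorem varpi_alpha_varpi (k : ℕ) (hk : 0 < k) (x : ℕ × ℕ × Fin 3) :
    varpiB 3 (alphaB k (varpiB 3 x)) = (lamB 3)^[k + 1] (alphaB k x) := by
  have hiter : ∀ (m : ℕ) (y : ℕ × ℕ × Fin 3),
      (lamB 3)^[m] y = (y.1 + m, y.2.1 + m, y.2.2) := by
    intro m
    induction m with
    | zero => intro y; simp
    | succ n ih =>
      intro y
      rw [Function.iterate_succ_apply, ih, lamB]
      simp; omega
  obtain ⟨i, j, p⟩ := x
  rw [hiter]
  fin_cases p <;>
    simp [varpiB, alphaB, Prod.ext_iff, Fin.ext_iff, mul_add, Nat.mul_sub] <;>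
    omega
end
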